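/- Let b > 0 and c > 0 be real, let A ∈ ℂ with Re A ≤ 0, and let ε ∈ {+1, −1}. Then Re[½(A − c + ε·√((A + c)² − 4b))] < 0, where √ is the principal square root. -/

import Mathlib

/-- The principal square root on `ℂ`: the square root with nonnegative real part
(and nonnegative imaginary part when the real part is zero). -/
noncomputable def csqrt (z : ℂ) : ℂ := z ^ (1 / 2 : ℂ)

lemma csqrt_sq (z : ℂ) : (csqrt z) ^ 2 = z := by
  have := Complex.cpow_nat_inv_pow z (two_ne_zero)
  simpa [csqrt, one_div] using this

lemma csqrt_re_nonneg (z : ℂ) : 0 ≤ (csqrt z).re := by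
  rcases eq_or_ne z 0 with rfl | hz
  · simp [csqrt, Complex.zero_cpow (by norm_num : (1/2 : ℂ) ≠ 0)]
  · rw [csqrt, Complex.cpow_def_of_ne_zero hz, Complex.exp_re]
    have him : (Complex.log z * (1/2 : ℂ)).im = z.arg / 2 := by
      simp [Complex.mul_im, Complex.log_im]; ring
    rw [him]
    have h1 : -(Real.pi/2) ≤ z.arg / 2 := by linarith [Complex.neg_pi_lt_arg z]
    have h2 : z.arg / 2 ≤ Real.pi/2 := by linarith [Complex.arg_le_pi z]
    exact mul_nonneg (Real.exp_nonneg _) (Real.cos_nonneg_of_mem_Icc ⟨h1, h2⟩)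

lemma csqrt_re_sq (z : ℂ) : 2 * (csqrt z).re ^ 2 = ‖z‖ + z.re := by
  have h := csqrt_sq z
  have habs : ‖z‖ = (csqrt z).re ^ 2 + (csqrt z).im ^ 2 := by
    conv_lhs => rw [← h]
    rw [norm_pow, ← Complex.normSq_eq_norm_sq, Complex.normSq_apply]; ring
  have hre : z.re = (csqrt z).re ^ 2 - (csqrt z).im ^ 2 := by
    conv_lhs => rw [← h]
    rw [sq, Complex.mul_re]; ring
  rw [habs, hre]; ring

/-- For `b, c > 0`, `Re A ≤ 0` and `ε = ±1`:
`Re[½(A − c + ε√((A+c)² − 4b))] < 0`. -/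
theorem stmt17 (b c : ℝ) (hb : 0 < b) (hc : 0 < c) (A : ℂ) (hA : A.re ≤ 0)
    (ε : ℂ) (hε : ε = 1 ∨ ε = -1) :
    ((A - (c : ℂ) + ε * csqrt ((A + (c : ℂ)) ^ 2 - 4 * (b : ℂ))) / 2).re < 0 := by
  set z : ℂ := (A + (c : ℂ)) ^ 2 - 4 * (b : ℂ) with hz
  set s : ℂ := csqrt z with hs
  set p : ℝ := A.re + c with hp
  set q : ℝ := A.im with hq
  have hr0 : 0 ≤ s.re := csqrt_re_nonneg z
  have h2 : 2 * s.re ^ 2 = ‖z‖ + z.re := csqrt_re_sq z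
  have hzre : z.re = p ^ 2 - q ^ 2 - 4 * b := by
    simp [hz, hp, hq, sq, Complex.mul_re, Complex.sub_re, Complex.add_re,
      Complex.add_im, Complex.mul_im]; try ring
  have hzim : z.im = 2 * p * q := by
    simp [hz, hp, hq, sq, Complex.mul_im, Complex.sub_im, Complex.add_re,
      Complex.add_im]; try ring
  have hN : (‖z‖) ^ 2 = z.re ^ 2 + z.im ^ 2 := by
    rw [Complex.sq_norm, Complex.normSq_apply]; ring
  have habsnn : 0 ≤ ‖z‖ := norm_nonneg z
  have hR : 0 ≤ p ^ 2 + q ^ 2 + 4 * b := by positivity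
  have hXsq : (‖z‖) ^ 2 ≤ (p ^ 2 + q ^ 2 + 4 * b) ^ 2 := by
    rw [hN, hzre, hzim]; nlinarith [mul_nonneg (sq_nonneg p) hb.le]
  have hXle : ‖z‖ ≤ p ^ 2 + q ^ 2 + 4 * b :=
    le_of_pow_le_pow_left₀ two_ne_zero hR hXsq
  have key : 2 * s.re ^ 2 ≤ 2 * p ^ 2 := by linarith [h2, hzre, hXle]
  have hrw : ((A - (c : ℂ) + ε * s) / 2).re = (A.re - c + (ε * s).re) / 2 := by
    rw [show (2 : ℂ) = ((2 : ℝ) : ℂ) by norm_num, Complex.div_ofReal_re]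
    simp [Complex.add_re, Complex.sub_re]
  rw [hrw]
  rcases hε with rfl | rfl
  · rw [one_mul]
    rcases eq_or_ne p 0 with hp0 | hp0
    · have hsr : s.re = 0 := le_antisymm (by nlinarith [key, hr0, hp0]) hr0
      have hAc : A.re = -c := by rw [hp0] at hp; linarith
      rw [hsr, hAc]; linarith
    · have hXsq' : (‖z‖) ^ 2 < (p ^ 2 + q ^ 2 + 4 * b) ^ 2 := by
        have hp2 : 0 < p ^ 2 := by positivity
        rw [hN, hzre, hzim]; nlinarith [mul_pos hp2 hb]
      have hXlt : ‖z‖ < p ^ 2 + q ^ 2 + 4 * b :=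
        lt_of_pow_lt_pow_left₀ 2 hR hXsq'
      have key' : s.re ^ 2 < p ^ 2 := by linarith [h2, hzre, hXlt]
      nlinarith [key', hr0, hA, hc, mul_nonneg (neg_nonneg.mpr hA) hc.le, hp]
  · rw [neg_one_mul, Complex.neg_re]
    linarith
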